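/- For any real numbers a > 0, b > 0, and k > 1, and any Δ ≠ 0 with 0 ≤ a/k + Δ < a, the deviator's total expected share (a + Δk)/(a + Δk + b)·(1/k) + ((k-1)/k)·(a - a/k - Δ)/(a - a/k - Δ + b - b/k) is strictly less than a/(a+b). -/

import Mathlib

set_option maxHeartbeats 2000000 in
theorem stmt_17 (a b k Δ : ℝ) (ha : 0 < a) (hb : 0 < b) (hk : 1 < k)
    (hΔ : Δ ≠ 0) (h1 : 0 ≤ a / k + Δ) (h2 : a / k + Δ < a) :
    (a + Δ * k) / (a + Δ * k + b) * (1 / k) +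
        (k - 1) / k * ((a - a / k - Δ) / (a - a / k - Δ + b - b / k)) <
      a / (a + b) := by
  have hk0 : (0:ℝ) < k := by linarith
  have hA : 0 ≤ a + Δ * k := by
    have := mul_nonneg h1 hk0.le
    calc (0:ℝ) ≤ (a / k + Δ) * k := this
    _ = a + Δ * k := by field_simp
  have hD1 : 0 < a + Δ * k + b := by linarith
  have hsub : 0 < a - a / k - Δ := by linarith
  have hb1 : 0 < b - b / k := by
    have : b / k < b := by
      rw [div_lt_iff₀ hk0]; nlinarith
    linarith
  have hD2 : 0 < a - a / k - Δ + b - b / k := by linarith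
  have hab : 0 < a + b := by linarith
  have hΔsq : 0 < Δ ^ 2 := by positivity
  have hP : 0 < a * (k - 1) + b * (k - 1) - Δ * k := by
    have h : a * (k - 1) + b * (k - 1) - Δ * k = k * (a - a / k - Δ + b - b / k) := by
      field_simp; ring
    rw [h]; positivity
  have hrw : (a - a / k - Δ) / (a - a / k - Δ + b - b / k)
      = (a * (k - 1) - Δ * k) / (a * (k - 1) + b * (k - 1) - Δ * k) := by
    rw [div_eq_div_iff hD2.ne' hP.ne']
    field_simp
    ring
  rw [hrw]
  have key : a / (a + b) -
      ((a + Δ * k) / (a + Δ * k + b) * (1 / k) +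
        (k - 1) / k * ((a * (k - 1) - Δ * k) / (a * (k - 1) + b * (k - 1) - Δ * k))) =
      b * Δ ^ 2 * k ^ 2 / ((a + b) * ((a * (k - 1) + b * (k - 1) - Δ * k) * (a + Δ * k + b))) := by
    have hPne := hP.ne'
    generalize hPg : a * (k - 1) + b * (k - 1) - Δ * k = P at hPne ⊢
    field_simp
    subst hPg
    ring
  have hpos : 0 < b * Δ ^ 2 * k ^ 2 / ((a + b) * ((a * (k - 1) + b * (k - 1) - Δ * k) * (a + Δ * k + b))) := by
    positivity
  linarith
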